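/- Let κ : ℝ → ℝ be twice continuously differentiable and positive, and let r : ℝ → ℝ² satisfy r'(θ) = (-sin θ, cos θ)/κ(θ) for all θ. Fix θ₀ ∈ ℝ. For all sufficiently small Δθ > 0, the tangent line to r at θ₀ (the line through r(θ₀) with direction (-sin θ₀, cos θ₀)) and the tangent line to r at θ₀ + Δθ (the line through r(θ₀ + Δθ) with direction (-sin(θ₀+Δθ), cos(θ₀+Δθ))) intersect in a unique point p(Δθ), and as Δθ → 0⁺, ⟨p(Δθ) - r(θ₀), (-sin θ₀, cos θ₀)⟩ = (1/κ(θ₀))·[Δθ/2 - ((Δθ)²/6)·(κ'(θ₀)/κ(θ₀))] + O((Δθ)³). -/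

import Mathlib

open Real Asymptotics

private lemma line_exists18 (A1 A2 B1 B2 s0 c0 s1 c1 u sΔ : ℝ)
    (pyth1 : s1^2 + c1^2 = 1)
    (hsin : s1*c0 - c1*s0 = sΔ)
    (hu : u * sΔ = (B1-A1)*c1 + (B2-A2)*s1) :
    ∃ t, A1 + u*(-s0) = B1 + t*(-s1) ∧ A2 + u*c0 = B2 + t*c1 := by
  set v1 := A1 + u*(-s0) - B1 with hv1
  set v2 := A2 + u*c0 - B2 with hv2
  have hn : v1*c1 + v2*s1 = 0 := by rw [hv1, hv2]; linear_combination u*hsin + hu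
  refine ⟨-v1*s1 + v2*c1, ?_, ?_⟩
  · linear_combination c1*hn - v1*pyth1
  · linear_combination s1*hn - v2*pyth1

private lemma line_unique18 (A1 A2 B1 B2 s0 c0 s1 c1 u sΔ a t q1 q2 : ℝ)
    (hsΔ : sΔ ≠ 0)
    (hsin : s1*c0 - c1*s0 = sΔ)
    (hu : u * sΔ = (B1-A1)*c1 + (B2-A2)*s1)
    (h1 : q1 = A1 + a*(-s0)) (h2 : q2 = A2 + a*c0)
    (h3 : q1 = B1 + t*(-s1)) (h4 : q2 = B2 + t*c1) :
    q1 = A1 + u*(-s0) ∧ q2 = A2 + u*c0 := by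
  have key : a * sΔ = u * sΔ := by
    linear_combination (-c1)*h1 + (-s1)*h2 + c1*h3 + s1*h4 - a*hsin - hu
  have : a = u := mul_right_cancel₀ hsΔ key
  subst this
  exact ⟨h1, h2⟩

private lemma chainBound18 {φ ψ : ℝ → ℝ} {C : ℝ} {n : ℕ} (hC : 0 ≤ C)
    (h0 : φ 0 = 0)
    (hd : ∀ t ∈ Set.Icc (0:ℝ) 1, HasDerivAt φ (ψ t) t)
    (hb : ∀ t ∈ Set.Icc (0:ℝ) 1, |ψ t| ≤ C * t ^ n) :
    ∀ t ∈ Set.Icc (0:ℝ) 1, |φ t| ≤ C * t ^ (n+1) := by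
  intro x hx
  have key : ‖φ x - φ 0‖ ≤ (C * x ^ n) * ‖x - 0‖ := by
    apply Convex.norm_image_sub_le_of_norm_hasDerivWithin_le
      (f' := ψ) (s := Set.Icc 0 x)
      (fun t ht => (hd t ⟨ht.1, ht.2.trans hx.2⟩).hasDerivWithinAt)
      (fun t ht => ?_) (convex_Icc 0 x) ⟨le_refl 0, hx.1⟩ ⟨hx.1, le_refl x⟩
    calc ‖ψ t‖ = |ψ t| := rfl
      _ ≤ C * t^n := hb t ⟨ht.1, ht.2.trans hx.2⟩
      _ ≤ C * x^n := by
          apply mul_le_mul_of_nonneg_left (pow_le_pow_left₀ ht.1 ht.2 n) hC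
  rw [h0, sub_zero, sub_zero, Real.norm_eq_abs, Real.norm_eq_abs,
    abs_of_nonneg hx.1] at key
  calc |φ x| ≤ C * x^n * x := key
    _ = C * x^(n+1) := by ring

/-- For a convex curve `r` parametrized by the normal angle (so
`r'(θ) = (-sin θ, cos θ)/κ(θ)` with `κ > 0` of class `C²`), for all small
`Δθ > 0` the tangent lines at `θ₀` and `θ₀ + Δθ` meet in a unique point
`p(Δθ)`, and
`⟨p(Δθ) - r(θ₀), (-sin θ₀, cos θ₀)⟩
  = (1/κ(θ₀))[Δθ/2 - ((Δθ)²/6)(κ'(θ₀)/κ(θ₀))] + O((Δθ)³)` as `Δθ → 0⁺`. -/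
theorem stmt18 (κ : ℝ → ℝ) (hκ : ContDiff ℝ 2 κ) (hκpos : ∀ θ, 0 < κ θ)
    (r : ℝ → ℝ × ℝ)
    (hr : ∀ θ : ℝ, HasDerivAt r (-Real.sin θ / κ θ, Real.cos θ / κ θ) θ)
    (θ₀ : ℝ) :
    ∃ ε > (0:ℝ), ∃ p : ℝ → ℝ × ℝ,
      (∀ Δθ ∈ Set.Ioo (0:ℝ) ε,
        ((∃ s : ℝ, p Δθ = r θ₀ + s • (-Real.sin θ₀, Real.cos θ₀)) ∧
         (∃ s : ℝ, p Δθ = r (θ₀ + Δθ)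
            + s • (-Real.sin (θ₀ + Δθ), Real.cos (θ₀ + Δθ)))) ∧
        (∀ q : ℝ × ℝ,
          ((∃ s : ℝ, q = r θ₀ + s • (-Real.sin θ₀, Real.cos θ₀)) ∧
           (∃ s : ℝ, q = r (θ₀ + Δθ)
              + s • (-Real.sin (θ₀ + Δθ), Real.cos (θ₀ + Δθ)))) → q = p Δθ)) ∧
      ((fun Δθ => ((p Δθ - r θ₀).1 * (-Real.sin θ₀) + (p Δθ - r θ₀).2 * Real.cos θ₀)
          - (1 / κ θ₀) * (Δθ / 2 - Δθ ^ 2 / 6 * (deriv κ θ₀ / κ θ₀)))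
        =O[nhdsWithin (0:ℝ) (Set.Ioi 0)] fun Δθ => Δθ ^ 3) := by
  have hshift : ∀ Δ : ℝ, HasDerivAt (fun Δ : ℝ => θ₀ + Δ) 1 Δ :=
    fun Δ => (hasDerivAt_id Δ).const_add θ₀
  have hshiftc : Continuous (fun Δ : ℝ => θ₀ + Δ) := continuous_const.add continuous_id
  have hR1 : ∀ Δ : ℝ, HasDerivAt (fun Δ => (r (θ₀+Δ)).1 - (r θ₀).1)
      (-Real.sin (θ₀+Δ) / κ (θ₀+Δ)) Δ := fun Δ => by
    simpa using (HasDerivAt.comp Δ ((hr (θ₀+Δ)).fst) (hshift Δ)).sub_const (r θ₀).1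
  have hR2 : ∀ Δ : ℝ, HasDerivAt (fun Δ => (r (θ₀+Δ)).2 - (r θ₀).2)
      (Real.cos (θ₀+Δ) / κ (θ₀+Δ)) Δ := fun Δ => by
    simpa using (HasDerivAt.comp Δ ((hr (θ₀+Δ)).snd) (hshift Δ)).sub_const (r θ₀).2
  have hCos : ∀ Δ : ℝ, HasDerivAt (fun Δ => Real.cos (θ₀+Δ)) (-Real.sin (θ₀+Δ)) Δ :=
    fun Δ => by exact (HasDerivAt.comp Δ (Real.hasDerivAt_cos (θ₀+Δ)) (hshift Δ)).congr_deriv (by simp)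
  have hSin : ∀ Δ : ℝ, HasDerivAt (fun Δ => Real.sin (θ₀+Δ)) (Real.cos (θ₀+Δ)) Δ :=
    fun Δ => by exact (HasDerivAt.comp Δ (Real.hasDerivAt_sin (θ₀+Δ)) (hshift Δ)).congr_deriv (by simp)
  have hK : ∀ Δ : ℝ, HasDerivAt (fun Δ => κ (θ₀+Δ)) (deriv κ (θ₀+Δ)) Δ := fun Δ => by
    exact (HasDerivAt.comp Δ ((hκ.differentiable (by norm_num) (θ₀+Δ)).hasDerivAt) (hshift Δ)).congr_deriv (by simp)
  set a := 1 / κ θ₀ with hadef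
  set b := deriv κ θ₀ / κ θ₀ with hbdef
  set G : ℝ → ℝ := fun Δ => ((r (θ₀+Δ)).1 - (r θ₀).1) * Real.cos (θ₀+Δ)
      + ((r (θ₀+Δ)).2 - (r θ₀).2) * Real.sin (θ₀+Δ) with hGdef
  set H : ℝ → ℝ := fun Δ => ((r (θ₀+Δ)).1 - (r θ₀).1) * (-Real.sin (θ₀+Δ))
      + ((r (θ₀+Δ)).2 - (r θ₀).2) * Real.cos (θ₀+Δ) with hHdef
  set F : ℝ → ℝ := fun Δ => 1 / κ (θ₀+Δ) with hFdef
  set F1 : ℝ → ℝ := fun Δ => -(deriv κ (θ₀+Δ)) / (κ (θ₀+Δ))^2 with hF1def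
  set T : ℝ → ℝ := fun Δ => a * (Δ/2 - Δ^2/6*b) with hTdef
  set T1 : ℝ → ℝ := fun Δ => a * (1/2 - Δ/3*b) with hT1def
  set T2 : ℝ := -(a*b)/3 with hT2def
  have hG : ∀ Δ, HasDerivAt G (H Δ) Δ := fun Δ => by
    rw [hGdef, hHdef]
    have key := ((hR1 Δ).mul (hCos Δ)).add ((hR2 Δ).mul (hSin Δ))
    refine key.congr_deriv ?_
    have h0 := (hκpos (θ₀+Δ)).ne'
    beta_reduce
    ring
  have hH : ∀ Δ, HasDerivAt H (F Δ - G Δ) Δ := fun Δ => by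
    rw [hHdef, hFdef, hGdef]
    have key := ((hR1 Δ).mul ((hSin Δ).neg)).add ((hR2 Δ).mul (hCos Δ))
    refine key.congr_deriv ?_
    have pyth := Real.sin_sq_add_cos_sq (θ₀+Δ)
    have h0 := (hκpos (θ₀+Δ)).ne'
    beta_reduce
    simp only [Pi.neg_apply]
    linear_combination (1 / κ (θ₀+Δ)) * pyth
  have hF : ∀ Δ, HasDerivAt F (F1 Δ) Δ := fun Δ => by
    rw [hFdef, hF1def]
    simpa [one_div, Pi.inv_def] using (hK Δ).inv (hκpos (θ₀+Δ)).ne'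
  have hκ2 : ContDiff ℝ (1+1) κ := by exact_mod_cast hκ
  have hdκ : ContDiff ℝ 1 (deriv κ) := (contDiff_succ_iff_deriv.mp hκ2).2.2
  have haff : ContDiff ℝ 1 (fun Δ : ℝ => θ₀ + Δ) := contDiff_const.add contDiff_id
  have hF1C : ContDiff ℝ 1 F1 := by
    rw [hF1def]
    exact ((hdκ.comp haff).neg).div
      (((hκ.of_le (by norm_num)).comp haff).pow 2)
      (fun Δ => pow_ne_zero 2 (hκpos _).ne')
  have hF1d : Differentiable ℝ F1 := hF1C.differentiable one_ne_zero
  have hF1 : ∀ Δ, HasDerivAt F1 (deriv F1 Δ) Δ := fun Δ => (hF1d Δ).hasDerivAt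
  have hF2c : Continuous (deriv F1) := by
    have h01 : ContDiff ℝ (0+1) F1 := by exact_mod_cast hF1C
    exact ((contDiff_succ_iff_deriv.mp h01).2.2).continuous
  have hT : ∀ Δ, HasDerivAt T (T1 Δ) Δ := fun Δ => by
    rw [hTdef, hT1def]
    have h1 : HasDerivAt (fun Δ : ℝ => Δ/2 - Δ^2/6*b) (1/2 - (2*Δ)/6*b) Δ := by
      simpa [Pi.sub_def] using ((hasDerivAt_id Δ).div_const 2).sub
        (((hasDerivAt_pow 2 Δ).div_const 6).mul_const b)
    have := h1.const_mul a
    exact this.congr_deriv (by beta_reduce; ring)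
  have hT1 : ∀ Δ, HasDerivAt T1 T2 Δ := fun Δ => by
    rw [hT1def, hT2def]
    have h1 : HasDerivAt (fun Δ : ℝ => 1/2 - Δ/3*b) (-(1/3*b)) Δ := by
      simpa [Pi.sub_def] using (hasDerivAt_const Δ ((1:ℝ)/2)).sub
        (((hasDerivAt_id Δ).div_const 3).mul_const b)
    have := h1.const_mul a
    exact this.congr_deriv (by beta_reduce; ring)
  set Φ : ℝ → ℝ := fun Δ => G Δ - Real.sin Δ * T Δ with hΦdef
  set Φ1 : ℝ → ℝ := fun Δ => H Δ - Real.cos Δ * T Δ - Real.sin Δ * T1 Δ with hΦ1def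
  set Φ2 : ℝ → ℝ := fun Δ => F Δ - G Δ + Real.sin Δ * T Δ - 2*(Real.cos Δ * T1 Δ)
      - Real.sin Δ * T2 with hΦ2def
  set Φ3 : ℝ → ℝ := fun Δ => F1 Δ - H Δ + Real.cos Δ * T Δ + 3*(Real.sin Δ * T1 Δ)
      - 3*(Real.cos Δ * T2) with hΦ3def
  set Φ4 : ℝ → ℝ := fun Δ => deriv F1 Δ - F Δ + G Δ - Real.sin Δ * T Δ
      + 4*(Real.cos Δ * T1 Δ) + 6*(Real.sin Δ * T2) with hΦ4def
  have hΦ : ∀ Δ, HasDerivAt Φ (Φ1 Δ) Δ := fun Δ => by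
    rw [hΦdef, hΦ1def]
    have key := (hG Δ).sub ((Real.hasDerivAt_sin Δ).mul (hT Δ))
    exact key.congr_deriv (by beta_reduce; ring)
  have hΦ1 : ∀ Δ, HasDerivAt Φ1 (Φ2 Δ) Δ := fun Δ => by
    rw [hΦ1def, hΦ2def]
    have key := ((hH Δ).sub ((Real.hasDerivAt_cos Δ).mul (hT Δ))).sub
      ((Real.hasDerivAt_sin Δ).mul (hT1 Δ))
    exact key.congr_deriv (by beta_reduce; ring)
  have hΦ2 : ∀ Δ, HasDerivAt Φ2 (Φ3 Δ) Δ := fun Δ => by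
    rw [hΦ2def, hΦ3def]
    have key := ((((hF Δ).sub (hG Δ)).add ((Real.hasDerivAt_sin Δ).mul (hT Δ))).sub
      (((Real.hasDerivAt_cos Δ).mul (hT1 Δ)).const_mul 2)).sub
      ((Real.hasDerivAt_sin Δ).mul_const T2)
    exact key.congr_deriv (by beta_reduce; ring)
  have hΦ3 : ∀ Δ, HasDerivAt Φ3 (Φ4 Δ) Δ := fun Δ => by
    rw [hΦ3def, hΦ4def]
    have key := ((((hF1 Δ).sub (hH Δ)).add ((Real.hasDerivAt_cos Δ).mul (hT Δ))).add
      (((Real.hasDerivAt_sin Δ).mul (hT1 Δ)).const_mul 3)).sub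
      (((Real.hasDerivAt_cos Δ).mul_const T2).const_mul 3)
    exact key.congr_deriv (by beta_reduce; ring)
  have hG0 : G 0 = 0 := by rw [hGdef]; simp
  have hH0 : H 0 = 0 := by rw [hHdef]; simp
  have hΦ0 : Φ 0 = 0 := by rw [hΦdef]; simp [hG0]
  have hΦ10 : Φ1 0 = 0 := by rw [hΦ1def, hTdef]; simp [hH0]
  have hΦ20 : Φ2 0 = 0 := by
    rw [hΦ2def, hFdef, hTdef, hT1def, hadef]; simp; ring_nf; simp [hG0]
  have hΦ30 : Φ3 0 = 0 := by
    rw [hΦ3def, hF1def, hTdef, hT1def, hT2def, hadef, hbdef]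
    simp [hH0]
    have h0 := (hκpos θ₀).ne'
    field_simp
    ring
  -- continuity and boundedness of Φ4
  have hrd : Differentiable ℝ r := fun θ => (hr θ).differentiableAt
  have hrc : Continuous r := hrd.continuous
  have hGd : Differentiable ℝ G := fun Δ => (hG Δ).differentiableAt
  have hGc : Continuous G := hGd.continuous
  have hFc : Continuous F := by
    rw [hFdef]
    exact continuous_const.div (hκ.continuous.comp hshiftc) (fun x => (hκpos _).ne')
  have hTc : Continuous T := by rw [hTdef]; fun_prop
  have hT1c : Continuous T1 := by rw [hT1def]; fun_prop
  have hΦ4c : Continuous Φ4 := by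
    rw [hΦ4def]
    exact ((((hF2c.sub hFc).add hGc).sub (Real.continuous_sin.mul hTc)).add
      (continuous_const.mul (Real.continuous_cos.mul hT1c))).add
      (continuous_const.mul (Real.continuous_sin.mul continuous_const))
  obtain ⟨M0, hM0⟩ := isCompact_Icc.exists_bound_of_continuousOn
    (hΦ4c.continuousOn (s := Set.Icc (0:ℝ) 1))
  set C := max M0 0 with hCdef
  have hC : 0 ≤ C := le_max_right _ _
  have b4 : ∀ t ∈ Set.Icc (0:ℝ) 1, |Φ4 t| ≤ C * t^0 := fun t ht => by
    rw [pow_zero, mul_one]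
    have := hM0 t ht
    rw [Real.norm_eq_abs] at this
    exact le_trans this (le_max_left _ _)
  have b3 := chainBound18 hC hΦ30 (fun t _ => hΦ3 t) b4
  have b2 := chainBound18 hC hΦ20 (fun t _ => hΦ2 t) b3
  have b1 := chainBound18 hC hΦ10 (fun t _ => hΦ1 t) b2
  have b0 := chainBound18 hC hΦ0 (fun t _ => hΦ t) b1
  -- the intersection point
  refine ⟨1, one_pos, fun Δ => r θ₀ + (G Δ / Real.sin Δ) • (-Real.sin θ₀, Real.cos θ₀),
    fun Δ hΔ => ?_, ?_⟩
  · have hsp : 0 < Real.sin Δ :=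
      Real.sin_pos_of_pos_of_lt_pi hΔ.1 (hΔ.2.trans (by linarith [Real.pi_gt_three]))
    have hsne : Real.sin Δ ≠ 0 := hsp.ne'
    have hsinid : Real.sin (θ₀+Δ) * Real.cos θ₀ - Real.cos (θ₀+Δ) * Real.sin θ₀
        = Real.sin Δ := by
      rw [Real.sin_add, Real.cos_add]
      linear_combination Real.sin Δ * Real.sin_sq_add_cos_sq θ₀
    have hu : (G Δ / Real.sin Δ) * Real.sin Δ
        = ((r (θ₀+Δ)).1 - (r θ₀).1) * Real.cos (θ₀+Δ)
          + ((r (θ₀+Δ)).2 - (r θ₀).2) * Real.sin (θ₀+Δ) := by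
      rw [div_mul_cancel₀ _ hsne, hGdef]
    refine ⟨⟨⟨G Δ / Real.sin Δ, rfl⟩, ?_⟩, ?_⟩
    · obtain ⟨t, h1, h2⟩ := line_exists18 (r θ₀).1 (r θ₀).2 (r (θ₀+Δ)).1 (r (θ₀+Δ)).2
        (Real.sin θ₀) (Real.cos θ₀) (Real.sin (θ₀+Δ)) (Real.cos (θ₀+Δ))
        (G Δ / Real.sin Δ) (Real.sin Δ) (Real.sin_sq_add_cos_sq _) hsinid hu
      refine ⟨t, Prod.ext ?_ ?_⟩ <;>
        simp only [Prod.fst_add, Prod.snd_add, Prod.smul_fst, Prod.smul_snd, smul_eq_mul]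
      exacts [h1, h2]
    · rintro q ⟨⟨sa, hqa⟩, ⟨sb, hqb⟩⟩
      have hqa1 : q.1 = (r θ₀).1 + sa * (-Real.sin θ₀) := by
        rw [hqa]; simp only [Prod.fst_add, Prod.smul_fst, smul_eq_mul]
      have hqa2 : q.2 = (r θ₀).2 + sa * (Real.cos θ₀) := by
        rw [hqa]; simp only [Prod.snd_add, Prod.smul_snd, smul_eq_mul]
      have hqb1 : q.1 = (r (θ₀+Δ)).1 + sb * (-Real.sin (θ₀+Δ)) := by
        rw [hqb]; simp only [Prod.fst_add, Prod.smul_fst, smul_eq_mul]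
      have hqb2 : q.2 = (r (θ₀+Δ)).2 + sb * (Real.cos (θ₀+Δ)) := by
        rw [hqb]; simp only [Prod.snd_add, Prod.smul_snd, smul_eq_mul]
      obtain ⟨e1, e2⟩ := line_unique18 (r θ₀).1 (r θ₀).2 (r (θ₀+Δ)).1 (r (θ₀+Δ)).2
        (Real.sin θ₀) (Real.cos θ₀) (Real.sin (θ₀+Δ)) (Real.cos (θ₀+Δ))
        (G Δ / Real.sin Δ) (Real.sin Δ) sa sb q.1 q.2 hsne hsinid hu hqa1 hqa2 hqb1 hqb2
      refine Prod.ext ?_ ?_ <;>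
        simp only [Prod.fst_add, Prod.snd_add, Prod.smul_fst, Prod.smul_snd, smul_eq_mul]
      exacts [e1, e2]
  · rw [Asymptotics.isBigO_iff]
    refine ⟨2*C, ?_⟩
    filter_upwards [Ioo_mem_nhdsGT_of_mem (Set.left_mem_Ico.mpr one_pos)] with Δ hΔ
    have hsp : 0 < Real.sin Δ :=
      Real.sin_pos_of_pos_of_lt_pi hΔ.1 (hΔ.2.trans (by linarith [Real.pi_gt_three]))
    have hsne : Real.sin Δ ≠ 0 := hsp.ne'
    have hb : |Φ Δ| ≤ C * Δ^4 := by
      have := b0 Δ ⟨hΔ.1.le, hΔ.2.le⟩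
      norm_num at this
      exact this
    have hval : ((r θ₀ + (G Δ / Real.sin Δ) • (-Real.sin θ₀, Real.cos θ₀) - r θ₀).1
          * (-Real.sin θ₀)
        + (r θ₀ + (G Δ / Real.sin Δ) • (-Real.sin θ₀, Real.cos θ₀) - r θ₀).2 * Real.cos θ₀)
        - a * (Δ / 2 - Δ ^ 2 / 6 * b) = Φ Δ / Real.sin Δ := by
      rw [hΦdef, hTdef]
      simp only [Prod.fst_add, Prod.snd_add, Prod.fst_sub, Prod.snd_sub,
        Prod.smul_fst, Prod.smul_snd, smul_eq_mul]
      obtain ⟨g, hg⟩ : ∃ g, G Δ = g := ⟨_, rfl⟩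
      rw [hg]
      have pyth := Real.sin_sq_add_cos_sq θ₀
      field_simp
      linear_combination (12 * g) * pyth
    rw [hval]
    have hsin2 : Δ/2 ≤ Real.sin Δ := by
      have := Real.sin_gt_sub_cube hΔ.1
      nlinarith [hΔ.1, hΔ.2]
    rw [Real.norm_eq_abs, Real.norm_eq_abs, abs_div, abs_of_pos hsp,
      abs_of_pos (pow_pos hΔ.1 3)]
    calc |Φ Δ| / Real.sin Δ ≤ (C*Δ^4)/(Δ/2) := by
          apply div_le_div₀ (mul_nonneg hC (by positivity)) hb
            (by linarith [hΔ.1]) hsin2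
      _ = 2*C*Δ^3 := by
          field_simp [hΔ.1.ne']
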